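/- If f(z) = 0 for all z ∈ ker B (the non-bending-dominated case), then the solutions tend to zero: lim_{ε→0⁺} ‖u^ε‖_H = 0. -/

import Mathlib

open RealInnerProductSpace Filter Topology

set_option maxHeartbeats 1600000 in
/-- If f(z) = 0 for all z ∈ ker B (the non-bending-dominated case), then the solutions
tend to zero: lim_{ε→0⁺} ‖u^ε‖_H = 0. -/
theorem stmt_7
    {H U V : Type*}
    [NormedAddCommGroup H] [InnerProductSpace ℝ H] [CompleteSpace H]
    [NormedAddCommGroup U] [InnerProductSpace ℝ U] [CompleteSpace U]
    [NormedAddCommGroup V] [InnerProductSpace ℝ V] [CompleteSpace V]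
    (A : H →L[ℝ] U) (B : H →L[ℝ] V)
    (c₁ c₂ : ℝ) (hc₁ : 0 < c₁) (hc₂ : 0 < c₂)
    (hlow : ∀ v : H, c₁ * ‖v‖ ≤ ‖A v‖ + ‖B v‖)
    (hup : ∀ v : H, ‖A v‖ + ‖B v‖ ≤ c₂ * ‖v‖)
    (f : H →L[ℝ] ℝ)
    (u : ℝ → H)
    (hu : ∀ ε : ℝ, 0 < ε → ∀ v : H,
      ⟪A (u ε), A v⟫ + (ε ^ 2)⁻¹ * ⟪B (u ε), B v⟫ = f v)
    (hf : ∀ z : H, B z = 0 → f z = 0) :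
    Tendsto (fun ε : ℝ => ‖u ε‖) (𝓝[>] 0) (𝓝 0) := by
  classical
  set M : ℝ := 2 * ‖f‖ / c₁ ^ 2 with hMdef
  have hM0 : 0 ≤ M := by positivity
  -- energy identity
  have hE : ∀ ε : ℝ, 0 < ε →
      ‖A (u ε)‖ ^ 2 + (ε ^ 2)⁻¹ * ‖B (u ε)‖ ^ 2 = f (u ε) := by
    intro ε hε
    have h := hu ε hε (u ε)
    rwa [real_inner_self_eq_norm_sq, real_inner_self_eq_norm_sq] at h
  -- uniform bound
  have hbound : ∀ ε : ℝ, 0 < ε → ε ≤ 1 → ‖u ε‖ ≤ M := by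
    intro ε hε hε1
    have hE1 := hE ε hε
    have hsq : 0 < ε ^ 2 := by positivity
    have hinv : (1 : ℝ) ≤ (ε ^ 2)⁻¹ := by
      have h1 : ε ^ 2 ≤ 1 := by nlinarith
      have h2 := mul_inv_cancel₀ (ne_of_gt hsq)
      nlinarith [inv_pos.mpr hsq]
    have hFle : f (u ε) ≤ ‖f‖ * ‖u ε‖ := by
      calc f (u ε) ≤ |f (u ε)| := le_abs_self _
        _ = ‖f (u ε)‖ := (Real.norm_eq_abs _).symm
        _ ≤ ‖f‖ * ‖u ε‖ := f.le_opNorm _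
    have hl := hlow (u ε)
    have ha : (0:ℝ) ≤ ‖A (u ε)‖ := norm_nonneg _
    have hb : (0:ℝ) ≤ ‖B (u ε)‖ := norm_nonneg _
    have hn : (0:ℝ) ≤ ‖u ε‖ := norm_nonneg _
    rcases hn.eq_or_lt with h0 | h0
    · rw [← h0]; exact hM0
    · rw [hMdef, le_div_iff₀ (by positivity)]
      nlinarith [sq_nonneg (‖A (u ε)‖ - ‖B (u ε)‖),
        mul_le_mul_of_nonneg_left hinv (sq_nonneg ‖B (u ε)‖),
        mul_self_le_mul_self (by positivity : (0:ℝ) ≤ c₁ * ‖u ε‖) hl]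
  -- Riesz representative and approximation by range of adjoint
  obtain ⟨w, hw⟩ : ∃ w : H, ∀ v : H, ⟪w, v⟫ = f v :=
    ⟨(InnerProductSpace.toDual ℝ H).symm f, fun v => InnerProductSpace.toDual_symm_apply⟩
  have hmem : w ∈ closure ((LinearMap.range (ContinuousLinearMap.adjoint B : V →ₗ[ℝ] H)) : Set H) := by
    have hwmem : w ∈ (LinearMap.ker (B : H →ₗ[ℝ] V))ᗮ := by
      rw [Submodule.mem_orthogonal]
      intro z hz
      rw [real_inner_comm, hw]
      exact hf z (LinearMap.mem_ker.mp hz)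
    have hsub : (LinearMap.range (ContinuousLinearMap.adjoint B : V →ₗ[ℝ] H))ᗮ ≤ LinearMap.ker (B : H →ₗ[ℝ] V) := by
      intro z hz
      rw [LinearMap.mem_ker]
      have h0 : ⟪(ContinuousLinearMap.adjoint B) (B z), z⟫ = 0 :=
        hz _ (LinearMap.mem_range_self _ _)
      rw [ContinuousLinearMap.adjoint_inner_left] at h0
      exact inner_self_eq_zero.mp h0
    have h1 := Submodule.orthogonal_le hsub
    have h2 := (LinearMap.range (ContinuousLinearMap.adjoint B : V →ₗ[ℝ] H)).orthogonal_orthogonal_eq_closure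
    have h3 := h1 hwmem
    rw [h2] at h3
    exact h3
  -- the tendsto statement
  rw [Metric.tendsto_nhdsWithin_nhds]
  intro η hη
  set C : ℝ := c₁ ^ 2 * η ^ 2 / 8 with hCdef
  have hC : 0 < C := by positivity
  -- approximation
  obtain ⟨y, hyS, hy⟩ := Metric.mem_closure_iff.mp hmem (C / (M + 1)) (by positivity)
  obtain ⟨g, hg⟩ := hyS
  have hwy : ‖w - y‖ < C / (M + 1) := by rwa [dist_eq_norm] at hy
  set D : ℝ := C + ‖g‖ * (c₂ * M) with hDdef
  have hD : 0 < D := by positivity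
  set ε₀ : ℝ := min 1 (C / ((‖g‖ + 1) * (Real.sqrt D + 1))) with hε₀def
  have hε₀pos : 0 < ε₀ := by
    apply lt_min one_pos
    positivity
  refine ⟨ε₀, hε₀pos, ?_⟩
  intro ε hεmem hεdist
  have hε : 0 < ε := hεmem
  have hεlt : ε < ε₀ := by
    rw [Real.dist_eq, sub_zero, abs_of_pos hε] at hεdist
    exact hεdist
  have hε1 : ε ≤ 1 := le_of_lt (lt_of_lt_of_le hεlt (min_le_left _ _))
  have hεC : ε < C / ((‖g‖ + 1) * (Real.sqrt D + 1)) :=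
    lt_of_lt_of_le hεlt (min_le_right _ _)
  have hn : ‖u ε‖ ≤ M := hbound ε hε hε1
  have hn0 : (0:ℝ) ≤ ‖u ε‖ := norm_nonneg _
  have hE1 := hE ε hε
  -- f(uε) ≤ C + ‖g‖‖B uε‖
  have hFle : f (u ε) ≤ C + ‖g‖ * ‖B (u ε)‖ := by
    have hsplit : f (u ε) = ⟪w - y, u ε⟫ + ⟪y, u ε⟫ := by
      rw [← hw, ← inner_add_left, sub_add_cancel]
    have h1 : ⟪w - y, u ε⟫ ≤ C := by
      calc ⟪w - y, u ε⟫ ≤ ‖w - y‖ * ‖u ε‖ := real_inner_le_norm _ _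
        _ ≤ (C / (M + 1)) * M := by
            apply mul_le_mul (le_of_lt hwy) hn hn0 (by positivity)
        _ ≤ C := by
            rw [div_mul_eq_mul_div, div_le_iff₀ (by positivity)]
            nlinarith
    have h2 : ⟪y, u ε⟫ ≤ ‖g‖ * ‖B (u ε)‖ := by
      rw [← hg, ContinuousLinearMap.coe_coe, ContinuousLinearMap.adjoint_inner_left]
      exact real_inner_le_norm _ _
    rw [hsplit]
    exact add_le_add h1 h2
  have hBle : ‖B (u ε)‖ ≤ c₂ * M := by
    have h := hup (u ε)
    have h' : c₂ * ‖u ε‖ ≤ c₂ * M := mul_le_mul_of_nonneg_left hn (le_of_lt hc₂)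
    linarith [norm_nonneg (A (u ε))]
  have hsq : 0 < ε ^ 2 := by positivity
  -- bound on ‖B uε‖²
  have hb2 : ‖B (u ε)‖ ^ 2 ≤ ε ^ 2 * D := by
    have h1 : (ε ^ 2)⁻¹ * ‖B (u ε)‖ ^ 2 ≤ D := by
      have hg0 : (0:ℝ) ≤ ‖g‖ := norm_nonneg _
      nlinarith [sq_nonneg ‖A (u ε)‖, mul_le_mul_of_nonneg_left hBle hg0]
    calc ‖B (u ε)‖ ^ 2 = ε ^ 2 * ((ε ^ 2)⁻¹ * ‖B (u ε)‖ ^ 2) := by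
          field_simp
      _ ≤ ε ^ 2 * D := by
          apply mul_le_mul_of_nonneg_left h1 (le_of_lt hsq)
  have hbε : ‖B (u ε)‖ ≤ ε * Real.sqrt D := by
    have h1 := Real.sqrt_le_sqrt hb2
    rwa [Real.sqrt_sq (norm_nonneg _), Real.sqrt_mul (sq_nonneg ε),
      Real.sqrt_sq (le_of_lt hε)] at h1
  -- ‖g‖ ‖B uε‖ ≤ C
  have hgB : ‖g‖ * ‖B (u ε)‖ ≤ C := by
    have hP : 0 < (‖g‖ + 1) * (Real.sqrt D + 1) := by positivity
    have h1 : ε * ((‖g‖ + 1) * (Real.sqrt D + 1)) < C := by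
      rw [lt_div_iff₀ hP] at hεC
      exact hεC
    have hsD : (0:ℝ) ≤ Real.sqrt D := Real.sqrt_nonneg _
    have hg0 : (0:ℝ) ≤ ‖g‖ := norm_nonneg _
    nlinarith [mul_le_mul_of_nonneg_left hbε hg0]
  -- conclude
  have hEfin : ‖A (u ε)‖ ^ 2 + (ε ^ 2)⁻¹ * ‖B (u ε)‖ ^ 2 ≤ 2 * C := by linarith
  have hinv : (1 : ℝ) ≤ (ε ^ 2)⁻¹ := by
    have h1 : ε ^ 2 ≤ 1 := by nlinarith
    have h2 := mul_inv_cancel₀ (ne_of_gt hsq)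
    nlinarith [inv_pos.mpr hsq]
  have hl := hlow (u ε)
  have hfinal : ‖u ε‖ < η := by
    by_contra hcon
    push_neg at hcon
    have h1 : η * η ≤ ‖u ε‖ * ‖u ε‖ := mul_self_le_mul_self (le_of_lt hη) hcon
    have h2 : (c₁ * ‖u ε‖) * (c₁ * ‖u ε‖)
        ≤ (‖A (u ε)‖ + ‖B (u ε)‖) * (‖A (u ε)‖ + ‖B (u ε)‖) :=
      mul_self_le_mul_self (by positivity) hl
    have h3 := mul_le_mul_of_nonneg_left hinv (sq_nonneg ‖B (u ε)‖)
    have h4 : c₁ ^ 2 * (η * η) ≤ c₁ ^ 2 * (‖u ε‖ * ‖u ε‖) :=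
      mul_le_mul_of_nonneg_left h1 (sq_nonneg c₁)
    rw [hCdef] at hEfin
    nlinarith [sq_nonneg (‖A (u ε)‖ - ‖B (u ε)‖),
      mul_pos (mul_pos hc₁ hc₁) (mul_pos hη hη)]
  rw [Real.dist_eq, sub_zero, abs_of_nonneg hn0]
  exact hfinal
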